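/- Suppose the matrix J = [T Φ Φ] ∈ ℂ^{n_e × 2n_s} has trivial nullspace, where T = diag(t_1,...,t_{n_e}). Then for every ξ_0 ∈ ℂ and every c_0 ∈ ℂ^{n_s}, the differential matrix Ds(ξ_0, c_0) = [2πi T W(ξ_0) Φ c_0 | W(ξ_0) Φ] ∈ ℂ^{n_e × (1+n_s)} is full-rank (rank 1 + n_s) for all c_0 ≠ 0, and conversely if J has non-trivial nullspace then there exist (ξ_0, c_0) for which Ds(ξ_0, c_0) is rank-deficient. -/

import Mathlib

set_option maxHeartbeats 1000000


open Complex Matrix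

noncomputable def Wmat {ne : ℕ} (t : Fin ne → ℝ) (ξ : ℂ) : Matrix (Fin ne) (Fin ne) ℂ :=
  Matrix.diagonal fun k => Complex.exp (2 * Real.pi * Complex.I * ξ * (t k))

/-- The differential matrix `Ds(ξ₀, c₀) = [2πi T W(ξ₀) Φ c₀ | W(ξ₀) Φ]`. -/
noncomputable def Ds {ne ns : ℕ} (t : Fin ne → ℝ) (Φ : Matrix (Fin ne) (Fin ns) ℂ)
    (ξ0 : ℂ) (c0 : Fin ns → ℂ) : Matrix (Fin ne) (Unit ⊕ Fin ns) ℂ :=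
  Matrix.of fun i j =>
    Sum.elim
      (fun _ : Unit =>
        ((2 * Real.pi * Complex.I) •
          ((Matrix.diagonal fun k => ((t k : ℝ) : ℂ)) * Wmat t ξ0 * Φ).mulVec c0) i)
      (fun l => (Wmat t ξ0 * Φ) i l) j

lemma Ds_apply_eq {ne ns : ℕ} (t : Fin ne → ℝ) (Φ : Matrix (Fin ne) (Fin ns) ℂ)
    (ξ0 : ℂ) (c0 : Fin ns → ℂ) (i : Fin ne) (j : Unit ⊕ Fin ns) :
    Ds t Φ ξ0 c0 i j =
      Complex.exp (2 * Real.pi * Complex.I * ξ0 * t i) * Ds t Φ 0 c0 i j := by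
  have hW0 : Wmat t 0 = 1 := by
    ext i j
    simp [Wmat, Matrix.diagonal, Matrix.one_apply]
  clear hW0
  rcases j with ⟨⟩ | l
  · simp only [Ds, Matrix.of_apply, Sum.elim_inl, Pi.smul_apply, smul_eq_mul, Wmat,
      ← Matrix.mulVec_mulVec, Matrix.mulVec_diagonal, mul_zero, zero_mul,
      Complex.exp_zero, one_mul]
    ring
  · simp only [Ds, Matrix.of_apply, Sum.elim_inr, Wmat, Matrix.diagonal_mul, mul_zero,
      zero_mul, Complex.exp_zero, one_mul]

lemma Ds_mulVec_eq {ne ns : ℕ} (t : Fin ne → ℝ) (Φ : Matrix (Fin ne) (Fin ns) ℂ)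
    (ξ0 : ℂ) (c0 : Fin ns → ℂ) (z : Unit ⊕ Fin ns → ℂ) (i : Fin ne) :
    (Ds t Φ ξ0 c0).mulVec z i =
      Complex.exp (2 * Real.pi * Complex.I * ξ0 * t i) *
        ((Matrix.fromCols ((Matrix.diagonal fun k => ((t k : ℝ) : ℂ)) * Φ) Φ).mulVec
          (Sum.elim ((2 * Real.pi * Complex.I * z (Sum.inl ())) • c0)
            (fun l => z (Sum.inr l))) i) := by
  have hW0 : Wmat t 0 = 1 := by
    ext i j
    simp [Wmat, Matrix.diagonal, Matrix.one_apply]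
  have step1 : (Ds t Φ ξ0 c0).mulVec z i =
      Complex.exp (2 * Real.pi * Complex.I * ξ0 * t i) * (Ds t Φ 0 c0).mulVec z i := by
    simp only [Matrix.mulVec, dotProduct, Finset.mul_sum]
    refine Finset.sum_congr rfl fun j _ => ?_
    rw [Ds_apply_eq]
    ring
  have step2 : (Ds t Φ 0 c0).mulVec z i =
      ((Matrix.fromCols ((Matrix.diagonal fun k => ((t k : ℝ) : ℂ)) * Φ) Φ).mulVec
        (Sum.elim ((2 * Real.pi * Complex.I * z (Sum.inl ())) • c0)
          (fun l => z (Sum.inr l))) i) := by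
    rw [Matrix.fromCols_mulVec_sumElim, Matrix.mulVec_smul]
    simp only [Matrix.mulVec, dotProduct, Fintype.sum_sum_type, Finset.univ_unique,
      Finset.sum_const, Finset.card_singleton, one_smul, Ds, Matrix.of_apply, Sum.elim_inl,
      Sum.elim_inr, hW0, mul_one, one_mul, Pi.smul_apply, smul_eq_mul, Pi.add_apply]
    rw [Finset.sum_singleton, Matrix.one_mul]
    ring
  rw [step1, step2]

lemma rank_eq_card_of_ker {m n : Type*} [Fintype m] [Fintype n] [DecidableEq n]
    (M : Matrix m n ℂ) (h : ∀ v : n → ℂ, M.mulVec v = 0 → v = 0) :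
    M.rank = Fintype.card n := by
  have h1 := LinearMap.finrank_range_add_finrank_ker M.mulVecLin
  have hker : LinearMap.ker M.mulVecLin = ⊥ := by
    rw [LinearMap.ker_eq_bot']
    intro v hv
    exact h v hv
  rw [hker, finrank_bot, add_zero, Module.finrank_pi] at h1
  exact h1

lemma rank_lt_card_of_ker {m n : Type*} [Fintype m] [Fintype n] [DecidableEq n]
    (M : Matrix m n ℂ) (v : n → ℂ) (hv : v ≠ 0) (h : M.mulVec v = 0) :
    M.rank < Fintype.card n := by
  have h1 := LinearMap.finrank_range_add_finrank_ker M.mulVecLin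
  rw [Module.finrank_pi] at h1
  have hker : 0 < Module.finrank ℂ (LinearMap.ker M.mulVecLin) := by
    rw [Module.finrank_pos_iff]
    exact nontrivial_of_ne ⟨v, h⟩ 0 (fun hc => hv (by simpa using congrArg Subtype.val hc))
  have hr : M.rank = Module.finrank ℂ (LinearMap.range M.mulVecLin) := rfl
  omega

theorem stmt_15 (ne ns : ℕ) (t : Fin ne → ℝ) (ht : ∀ k, 0 < t k)
    (Φ : Matrix (Fin ne) (Fin ns) ℂ)
    (J : Matrix (Fin ne) (Fin ns ⊕ Fin ns) ℂ)
    (hJ : J = Matrix.fromCols ((Matrix.diagonal fun k => ((t k : ℝ) : ℂ)) * Φ) Φ) :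
    ((∀ z : Fin ns ⊕ Fin ns → ℂ, J.mulVec z = 0 → z = 0) →
      ∀ (ξ0 : ℂ) (c0 : Fin ns → ℂ), c0 ≠ 0 → (Ds t Φ ξ0 c0).rank = 1 + ns) ∧
    ((∃ z : Fin ns ⊕ Fin ns → ℂ, z ≠ 0 ∧ J.mulVec z = 0) →
      ∃ (ξ0 : ℂ) (c0 : Fin ns → ℂ), (Ds t Φ ξ0 c0).rank < 1 + ns) := by
  have htwopi : (2 * (Real.pi : ℂ) * Complex.I) ≠ 0 := by
    simp [Real.pi_ne_zero, Complex.I_ne_zero, Complex.ofReal_ne_zero]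
  constructor
  · intro hker ξ0 c0 hc0
    have := rank_eq_card_of_ker (Ds t Φ ξ0 c0) ?_
    · simpa using this
    · intro z hz
      have hJz : J.mulVec (Sum.elim ((2 * Real.pi * Complex.I * z (Sum.inl ())) • c0)
          (fun l => z (Sum.inr l))) = 0 := by
        funext i
        have h1 := Ds_mulVec_eq t Φ ξ0 c0 z i
        have h2 : (Ds t Φ ξ0 c0).mulVec z i = 0 := by rw [hz]; rfl
        rw [h2] at h1
        have := Complex.exp_ne_zero (2 * Real.pi * Complex.I * ξ0 * t i)
        rw [hJ]
        exact (mul_eq_zero.mp h1.symm).resolve_left this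
      have hz0 := hker _ hJz
      have hα : z (Sum.inl ()) = 0 := by
        obtain ⟨l, hl⟩ := Function.ne_iff.mp hc0
        have := congrFun hz0 (Sum.inl l)
        simp only [Sum.elim_inl, Pi.smul_apply, smul_eq_mul, Pi.zero_apply] at this
        rcases mul_eq_zero.mp this with h | h
        · rcases mul_eq_zero.mp h with h' | h'
          · exact absurd h' htwopi
          · exact h'
        · exact absurd h hl
      funext j
      rcases j with ⟨⟩ | l
      · exact hα
      · have := congrFun hz0 (Sum.inr l)
        simpa using this
  · rintro ⟨z, hz, hJz⟩
    refine ⟨0, fun l => z (Sum.inl l), ?_⟩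
    have key : (Ds t Φ 0 (fun l => z (Sum.inl l))).mulVec
        (Sum.elim (fun _ => (2 * Real.pi * Complex.I)⁻¹) (fun l => z (Sum.inr l))) = 0 := by
      funext i
      rw [Ds_mulVec_eq]
      have h1 : (2 * (Real.pi : ℂ) * Complex.I *
          (Sum.elim (fun _ : Unit => (2 * (Real.pi:ℂ) * Complex.I)⁻¹)
            (fun l => z (Sum.inr l)) (Sum.inl ()))) = 1 := by
        rw [Sum.elim_inl]
        exact mul_inv_cancel₀ htwopi
      rw [h1, one_smul]
      have hz' : (Sum.elim (fun l => z (Sum.inl l))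
          (fun l => (Sum.elim (fun _ : Unit => (2 * (Real.pi:ℂ) * Complex.I)⁻¹)
            (fun l => z (Sum.inr l))) (Sum.inr l))) = z := by
        funext j; rcases j with l | l <;> simp
      rw [hz', ← hJ, hJz]
      simp
    have hne : (Sum.elim (fun _ : Unit => (2 * (Real.pi:ℂ) * Complex.I)⁻¹)
        (fun l => z (Sum.inr l)) : Unit ⊕ Fin ns → ℂ) ≠ 0 := by
      intro h
      have := congrFun h (Sum.inl ())
      simp only [Sum.elim_inl, Pi.zero_apply, inv_eq_zero] at this
      exact htwopi this
    have := rank_lt_card_of_ker (Ds t Φ 0 (fun l => z (Sum.inl l))) _ hne key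
    simpa using this
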